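/- arXiv:1109.4924 — 2 statements merged into one kernel-verified Lean document; each statement's English description precedes it below -/
import Mathlib

section
/- Let p > 1 and let g : (1,∞) → ℝ be any function such that for every t > 1, g(t) ∈ [1, p/(p-1)] and -(p-1)·g(t)^p + p·g(t)^{p-1} = 1/t. Then the function G : (1,∞) → ℝ defined by G(t) = t · g(t)^p is strictly concave on (1,∞). -/
open Set

/-- Strict Young/tangent-line inequality: `p z w^(p-1) < z^p + (p-1) w^p` for `z ≠ w`. -/
lemma young_strict {p z w : ℝ} (hp : 1 < p) (hz : 0 < z) (hw : 0 < w) (hzw : z ≠ w) :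
    p * z * w ^ (p - 1) < z ^ p + (p - 1) * w ^ p := by
  have hs : -1 ≤ z / w - 1 := by
    have : 0 < z / w := div_pos hz hw
    linarith
  have hs' : z / w - 1 ≠ 0 := by
    have : z / w ≠ 1 := by
      intro h
      exact hzw ((div_eq_one_iff_eq hw.ne').mp h)
    intro h; apply this; linarith
  have hber := one_add_mul_self_lt_rpow_one_add hs hs' hp
  have h1 : (1 + (z / w - 1)) ^ p = z ^ p / w ^ p := by
    rw [show 1 + (z / w - 1) = z / w by ring, Real.div_rpow hz.le hw.le]
  rw [h1] at hber
  have hwp : 0 < w ^ p := Real.rpow_pos_of_pos hw p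
  have h2 : (1 + p * (z / w - 1)) * w ^ p < z ^ p := by
    have := (mul_lt_mul_of_pos_right hber hwp)
    rwa [div_mul_cancel₀ _ hwp.ne'] at this
  have h3 : w ^ (p - 1) * w = w ^ p := by
    rw [Real.rpow_sub hw, Real.rpow_one]
    field_simp
  have h4 : (1 + p * (z / w - 1)) * w ^ p = w ^ p + p * z * w ^ (p - 1) - p * w ^ p := by
    field_simp
    linear_combination (-(p * z)) * h3
  rw [h4] at h2
  linarith

/-- If `t * H(w) = 1` then `(t w^p - w)/((p-1)(w-1)) = t w^p`. -/
lemma core_eq {p t w : ℝ} (hp : 1 < p) (hw : 1 < w)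
    (hH : t * (-(p - 1) * w ^ p + p * w ^ (p - 1)) = 1) :
    (t * w ^ p - w) / ((p - 1) * (w - 1)) = t * w ^ p := by
  have hden : (p - 1) * (w - 1) ≠ 0 :=
    (mul_pos (by linarith : (0:ℝ) < p - 1) (by linarith : (0:ℝ) < w - 1)).ne'
  rw [div_eq_iff hden]
  have hw0 : 0 < w := by linarith
  have hw1 : w ^ (p - 1) * w = w ^ p := by
    rw [Real.rpow_sub hw0, Real.rpow_one]
    field_simp
  linear_combination w * hH - p * t * hw1

/-- If `t * H(w) = 1` and `z ≠ w`, then `t w^p < (t z^p - z)/((p-1)(z-1))`. -/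
lemma core_lt {p t z w : ℝ} (hp : 1 < p) (ht : 0 < t) (hz : 1 < z) (hw : 0 < w)
    (hH : t * (-(p - 1) * w ^ p + p * w ^ (p - 1)) = 1) (hzw : z ≠ w) :
    t * w ^ p < (t * z ^ p - z) / ((p - 1) * (z - 1)) := by
  have hden : 0 < (p - 1) * (z - 1) := by
    have h1 : 0 < p - 1 := by linarith
    have h2 : 0 < z - 1 := by linarith
    positivity
  rw [lt_div_iff₀ hden]
  have hy := young_strict hp (by linarith : (0:ℝ) < z) hw hzw
  have hpos : 0 < t * (z ^ p + (p - 1) * w ^ p - p * z * w ^ (p - 1)) :=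
    mul_pos ht (by linarith)
  have hz1 : z * (t * (-(p - 1) * w ^ p + p * w ^ (p - 1))) = z := by rw [hH, mul_one]
  nlinarith [hpos, hz1]

/-- The function `G(t) = t ω_p(1/t)^p` is strictly concave on `(1, ∞)`. -/
theorem bellman_strictConcaveOn (p : ℝ) (hp : 1 < p) (g : ℝ → ℝ)
    (hg : ∀ t : ℝ, 1 < t → g t ∈ Set.Icc 1 (p / (p - 1)) ∧
      -(p - 1) * g t ^ p + p * g t ^ (p - 1) = 1 / t) :
    StrictConcaveOn ℝ (Set.Ioi (1 : ℝ)) (fun t => t * g t ^ p) := by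
  have hp1 : (0:ℝ) < p - 1 := by linarith
  have hfacts : ∀ t : ℝ, 1 < t → 1 < g t ∧
      t * (-(p - 1) * g t ^ p + p * g t ^ (p - 1)) = 1 := by
    intro t ht
    obtain ⟨⟨hg1, _⟩, heq⟩ := hg t ht
    have ht0 : (0:ℝ) < t := by linarith
    have hH1 : t * (-(p - 1) * g t ^ p + p * g t ^ (p - 1)) = 1 := by
      rw [heq]; field_simp
    refine ⟨?_, hH1⟩
    rcases eq_or_lt_of_le hg1 with h | h
    · exfalso
      rw [← h] at heq
      simp only [Real.one_rpow] at heq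
      have : (1:ℝ) / t < 1 := by
        rw [div_lt_one ht0]; exact ht
      linarith
    · exact h
  constructor
  · exact convex_Ioi 1
  intro x hx y hy hxy a b ha hb hab
  simp only [smul_eq_mul]
  rw [mem_Ioi] at hx hy
  have hsx : (1:ℝ) < a * x + b * y := by nlinarith
  obtain ⟨hgs1, hHs⟩ := hfacts (a * x + b * y) hsx
  obtain ⟨hgx1, hHx⟩ := hfacts x hx
  obtain ⟨hgy1, hHy⟩ := hfacts y hy
  set w : ℝ := g (a * x + b * y) with hw
  set D : ℝ := (p - 1) * (w - 1) with hD
  have hD0 : D ≠ 0 := by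
    have : 0 < w - 1 := by linarith
    positivity
  -- the bound for each point
  have bound : ∀ t : ℝ, 1 < t →
      t * g t ^ p ≤ (t * w ^ p - w) / D := by
    intro t ht
    obtain ⟨hgt1, hHt⟩ := hfacts t ht
    rcases eq_or_ne w (g t) with h | h
    · rw [hD, h]
      exact le_of_eq (core_eq hp hgt1 hHt).symm
    · exact le_of_lt (core_lt hp (by linarith) hgs1 (by linarith) hHt h)
  have bound_lt : ∀ t : ℝ, 1 < t → w ≠ g t →
      t * g t ^ p < (t * w ^ p - w) / D := by
    intro t ht h
    obtain ⟨hgt1, hHt⟩ := hfacts t ht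
    exact core_lt hp (by linarith) hgs1 (by linarith) hHt h
  -- g is injective on (1,∞)
  have hne : w ≠ g x ∨ w ≠ g y := by
    by_contra h
    push_neg at h
    obtain ⟨h1, h2⟩ := h
    apply hxy
    have hxy' : x * (-(p - 1) * g x ^ p + p * g x ^ (p - 1)) =
        y * (-(p - 1) * g x ^ p + p * g x ^ (p - 1)) := by
      rw [hHx, show g x = g y from h1.symm.trans h2, hHy]
    have hH0 : -(p - 1) * g x ^ p + p * g x ^ (p - 1) ≠ 0 := by
      intro h0
      rw [h0, mul_zero] at hHx
      exact one_ne_zero hHx.symm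
    exact mul_right_cancel₀ hH0 hxy'
  -- affine combination
  have haff : a * ((x * w ^ p - w) / D) + b * ((y * w ^ p - w) / D) =
      ((a * x + b * y) * w ^ p - w) / D := by
    rw [← mul_div_assoc, ← mul_div_assoc, ← add_div]
    congr 1
    linear_combination (-w) * hab
  have hGs : ((a * x + b * y) * w ^ p - w) / D = (a * x + b * y) * w ^ p :=
    core_eq hp hgs1 hHs
  have hstep : a * (x * g x ^ p) + b * (y * g y ^ p) <
      a * ((x * w ^ p - w) / D) + b * ((y * w ^ p - w) / D) := by
    rcases hne with h | h
    · have h1 := bound_lt x hx h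
      have h2 := bound y hy
      nlinarith [mul_lt_mul_of_pos_left h1 ha, mul_le_mul_of_nonneg_left h2 hb.le]
    · have h1 := bound x hx
      have h2 := bound_lt y hy h
      nlinarith [mul_le_mul_of_nonneg_left h1 ha.le, mul_lt_mul_of_pos_left h2 hb]
  calc a * (x * g x ^ p) + b * (y * g y ^ p)
      < a * ((x * w ^ p - w) / D) + b * ((y * w ^ p - w) / D) := hstep
    _ = (a * x + b * y) * w ^ p := by rw [haff, hGs]
end

section
/- Let n ≥ 1, let Q = [0,1)^n with Lebesgue measure, let p > 1, let f, F be reals with 0 < f^p < F, and let z ∈ [1, p/(p-1)] satisfy -(p-1)z^p + p z^{p-1} = f^p/F. Then there is no nonnegative measurable function φ on Q with ∫_Q φ = f, ∫_Q φ^p = F, and ∫_Q (Mφ)^p = F·z^p. -/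
open MeasureTheory Set Filter

noncomputable section

/-- The unit cube `[0,1)^n` in `ℝ^n`. -/
def unitCube (n : ℕ) : Set (Fin n → ℝ) := Set.univ.pi fun _ => Set.Ico (0:ℝ) 1

/-- A dyadic subcube of the unit cube: a product of intervals
`[k_i 2^{-N}, (k_i+1) 2^{-N})` with `0 ≤ k_i < 2^N`. -/
def IsDyadicCube (n : ℕ) (R : Set (Fin n → ℝ)) : Prop :=
  ∃ (N : ℕ) (k : Fin n → ℕ), (∀ i, k i < 2 ^ N) ∧
    R = Set.univ.pi fun i => Set.Ico ((k i : ℝ) / 2 ^ N) (((k i : ℝ) + 1) / 2 ^ N)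

/-- The (localized) dyadic maximal operator on the unit cube:
`Mφ(x) = sup { (1/|R|) ∫_R φ : x ∈ R, R a dyadic subcube of Q }`. -/
def dyadicMax (n : ℕ) (φ : (Fin n → ℝ) → ℝ) (x : Fin n → ℝ) : ℝ :=
  sSup { a : ℝ | ∃ R : Set (Fin n → ℝ), IsDyadicCube n R ∧ x ∈ R ∧
    a = ((volume R).toReal)⁻¹ * ∫ y in R, φ y }

/-- The dyadic maximal operator localized to a dyadic subcube `J`:
the supremum is taken only over dyadic subcubes contained in `J`. -/
def dyadicMaxIn (n : ℕ) (J : Set (Fin n → ℝ)) (φ : (Fin n → ℝ) → ℝ)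
    (x : Fin n → ℝ) : ℝ :=
  sSup { a : ℝ | ∃ R : Set (Fin n → ℝ), IsDyadicCube n R ∧ R ⊆ J ∧ x ∈ R ∧
    a = ((volume R).toReal)⁻¹ * ∫ y in R, φ y }

namespace NoExt

def dIco (N a : ℕ) : Set ℝ := Set.Ico ((a : ℝ) / 2 ^ N) (((a : ℝ) + 1) / 2 ^ N)

def dCube (n N : ℕ) (k : Fin n → ℕ) : Set (Fin n → ℝ) :=
  Set.univ.pi fun i => dIco N (k i)

lemma isDyadicCube_iff {n : ℕ} {R : Set (Fin n → ℝ)} :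
    IsDyadicCube n R ↔ ∃ N k, (∀ i, k i < 2 ^ N) ∧ R = dCube n N k := Iff.rfl

lemma two_pow_pos (N : ℕ) : (0:ℝ) < 2 ^ N := by positivity

lemma dIco_key {N M : ℕ} (h : N ≤ M) (a : ℕ) :
    ((a : ℝ) * (2 ^ (M - N) : ℕ)) / 2 ^ M = (a : ℝ) / 2 ^ N := by
  have h2 : (2:ℝ) ^ M = 2 ^ N * ((2 ^ (M - N) : ℕ) : ℝ) := by
    push_cast
    rw [← pow_add, Nat.add_sub_cancel' h]
  have hc : ((2 ^ (M - N) : ℕ) : ℝ) ≠ 0 := by positivity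
  have hN : (2:ℝ) ^ N ≠ 0 := by positivity
  rw [h2]
  field_simp

lemma mem_dIco {N a : ℕ} {x : ℝ} :
    x ∈ dIco N a ↔ (a : ℝ) / 2 ^ N ≤ x ∧ x < ((a : ℝ) + 1) / 2 ^ N := Iff.rfl

lemma dIco_subset_or_disjoint {N M a b : ℕ} (h : N ≤ M) :
    dIco M b ⊆ dIco N a ∨ Disjoint (dIco M b) (dIco N a) := by
  have hM : (0:ℝ) < 2 ^ M := two_pow_pos M
  have hkey1 : ((a : ℝ) * (2 ^ (M - N) : ℕ)) / 2 ^ M = (a : ℝ) / 2 ^ N := dIco_key h a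
  have hkey2 : (((a + 1 : ℕ) : ℝ) * (2 ^ (M - N) : ℕ)) / 2 ^ M = ((a + 1 : ℕ) : ℝ) / 2 ^ N :=
    dIco_key h (a + 1)
  by_cases h1 : b < a * 2 ^ (M - N)
  · right
    refine Set.disjoint_left.2 fun x hx hx' => ?_
    have h1' : (b : ℕ) + 1 ≤ a * 2 ^ (M - N) := h1
    have hb1 : ((b:ℝ) + 1) / 2 ^ M ≤ ((a:ℝ) * (2 ^ (M - N) : ℕ)) / 2 ^ M := by
      gcongr
      exact_mod_cast h1'
    have : x < (a:ℝ) / 2 ^ N := lt_of_lt_of_le hx.2 (hkey1 ▸ hb1)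
    exact absurd hx'.1 (not_le.2 this)
  by_cases h2 : (a + 1) * 2 ^ (M - N) ≤ b
  · right
    refine Set.disjoint_left.2 fun x hx hx' => ?_
    have hb1 : (((a + 1 : ℕ) : ℝ) * (2 ^ (M - N) : ℕ)) / 2 ^ M ≤ (b:ℝ) / 2 ^ M := by
      gcongr
      exact_mod_cast h2
    have key : ((a + 1 : ℕ) : ℝ) / 2 ^ N ≤ x := hkey2 ▸ le_trans hb1 hx.1
    have : ((a:ℝ) + 1) / 2 ^ N ≤ x := by push_cast at key; linarith
    exact absurd hx'.2 (not_lt.2 this)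
  · left
    push_neg at h1 h2
    intro x hx
    constructor
    · calc (a:ℝ) / 2 ^ N = ((a:ℝ) * (2 ^ (M - N) : ℕ)) / 2 ^ M := hkey1.symm
        _ ≤ (b:ℝ) / 2 ^ M := by gcongr; exact_mod_cast h1
        _ ≤ x := hx.1
    · have hb1 : (b : ℕ) + 1 ≤ (a + 1) * 2 ^ (M - N) := h2
      have step : ((b:ℝ) + 1) / 2 ^ M ≤ (((a + 1 : ℕ) : ℝ) * (2 ^ (M - N) : ℕ)) / 2 ^ M := by
        gcongr
        exact_mod_cast hb1
      calc x < ((b:ℝ) + 1) / 2 ^ M := hx.2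
        _ ≤ ((a + 1 : ℕ) : ℝ) / 2 ^ N := hkey2 ▸ step
        _ = ((a:ℝ) + 1) / 2 ^ N := by push_cast; ring

lemma mem_dCube {n N : ℕ} {k : Fin n → ℕ} {x : Fin n → ℝ} :
    x ∈ dCube n N k ↔ ∀ i, x i ∈ dIco N (k i) := by
  simp [dCube, Set.mem_univ_pi]

lemma dCube_subset_or_disjoint {n N M : ℕ} {k k' : Fin n → ℕ} (h : N ≤ M) :
    dCube n M k' ⊆ dCube n N k ∨ Disjoint (dCube n M k') (dCube n N k) := by
  by_cases hall : ∀ i, dIco M (k' i) ⊆ dIco N (k i)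
  · left
    intro x hx
    rw [mem_dCube] at hx ⊢
    exact fun i => hall i (hx i)
  · right
    push_neg at hall
    obtain ⟨i, hi⟩ := hall
    rcases dIco_subset_or_disjoint (a := k i) (b := k' i) h with hsub | hdis
    · exact absurd hsub hi
    · refine Set.disjoint_left.2 fun x hx hx' => ?_
      exact Set.disjoint_left.1 hdis (mem_dCube.1 hx i) (mem_dCube.1 hx' i)

lemma dCube_nested_or_disjoint {n N M : ℕ} {k k' : Fin n → ℕ} :
    dCube n M k' ⊆ dCube n N k ∨ dCube n N k ⊆ dCube n M k' ∨
      Disjoint (dCube n M k') (dCube n N k) := by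
  rcases le_total N M with h | h
  · rcases dCube_subset_or_disjoint (k := k) (k' := k') h with h' | h'
    · exact Or.inl h'
    · exact Or.inr (Or.inr h')
  · rcases dCube_subset_or_disjoint (k := k') (k' := k) h with h' | h'
    · exact Or.inr (Or.inl h')
    · exact Or.inr (Or.inr h'.symm)

lemma measurableSet_dCube {n N : ℕ} {k : Fin n → ℕ} : MeasurableSet (dCube n N k) :=
  MeasurableSet.univ_pi fun _ => measurableSet_Ico

lemma volume_dCube {n N : ℕ} (k : Fin n → ℕ) :
    volume (dCube n N k) = ENNReal.ofReal ((((2:ℝ) ^ N)⁻¹) ^ n) := by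
  rw [dCube, volume_pi_pi]
  have : ∀ i : Fin n, volume (dIco N (k i)) = ENNReal.ofReal (((2:ℝ) ^ N)⁻¹) := by
    intro i
    rw [dIco, Real.volume_Ico]
    congr 1
    have : (2:ℝ) ^ N ≠ 0 := by positivity
    field_simp
    ring
  simp only [this, Finset.prod_const, Finset.card_univ, Fintype.card_fin]
  rw [ENNReal.ofReal_pow (by positivity)]

lemma volume_dCube_ne_top {n N : ℕ} (k : Fin n → ℕ) : volume (dCube n N k) ≠ ⊤ := by
  rw [volume_dCube]; exact ENNReal.ofReal_ne_top

lemma volume_dCube_pos {n N : ℕ} (k : Fin n → ℕ) : 0 < volume (dCube n N k) := by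
  rw [volume_dCube]
  exact ENNReal.ofReal_pos.2 (by positivity)

lemma volume_dCube_toReal_pos {n N : ℕ} (k : Fin n → ℕ) :
    0 < (volume (dCube n N k)).toReal := by
  rw [volume_dCube, ENNReal.toReal_ofReal (by positivity)]
  positivity

lemma corner_mem_dCube {n N : ℕ} (k : Fin n → ℕ) :
    (fun i => (k i : ℝ) / 2 ^ N) ∈ dCube n N k := by
  rw [mem_dCube]
  intro i
  refine ⟨le_refl _, ?_⟩
  have := two_pow_pos N
  gcongr
  linarith

lemma dCube_subset_unitCube {n N : ℕ} {k : Fin n → ℕ} (hk : ∀ i, k i < 2 ^ N) :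
    dCube n N k ⊆ unitCube n := by
  intro x hx
  rw [mem_dCube] at hx
  intro i _
  have h2 := two_pow_pos N
  have h1 := (hx i).1
  have h2' := (hx i).2
  constructor
  · have : (0:ℝ) ≤ (k i : ℝ) / 2 ^ N := by positivity
    linarith
  · have hki : (k i : ℝ) + 1 ≤ 2 ^ N := by
      have : ((k i : ℕ) : ℝ) + 1 ≤ ((2 ^ N : ℕ) : ℝ) := by exact_mod_cast hk i
      push_cast at this; linarith
    calc x i < ((k i : ℝ) + 1) / 2 ^ N := h2'
      _ ≤ (2:ℝ) ^ N / 2 ^ N := by gcongr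
      _ = 1 := by field_simp

lemma unitCube_eq_dCube {n : ℕ} : unitCube n = dCube n 0 (fun _ => 0) := by
  simp [unitCube, dCube, dIco]

lemma unitCube_isDyadic {n : ℕ} : IsDyadicCube n (unitCube n) :=
  ⟨0, fun _ => 0, fun _ => by norm_num, unitCube_eq_dCube⟩

lemma volume_unitCube {n : ℕ} : volume (unitCube n) = 1 := by
  rw [unitCube_eq_dCube (n := n), volume_dCube]
  norm_num

lemma measurableSet_unitCube {n : ℕ} : MeasurableSet (unitCube n) := by
  rw [unitCube_eq_dCube]; exact measurableSet_dCube

lemma level_le_of_subset {n : ℕ} (hn : 1 ≤ n) {N M : ℕ} {k k' : Fin n → ℕ}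
    (h : dCube n N k ⊆ dCube n M k') : M ≤ N := by
  have hv : volume (dCube n N k) ≤ volume (dCube n M k') := measure_mono h
  rw [volume_dCube, volume_dCube] at hv
  have hv' : (((2:ℝ) ^ N)⁻¹) ^ n ≤ (((2:ℝ) ^ M)⁻¹) ^ n := by
    rw [ENNReal.ofReal_le_ofReal_iff (by positivity)] at hv
    exact hv
  have h1 : ((2:ℝ) ^ N)⁻¹ ≤ ((2:ℝ) ^ M)⁻¹ := by
    have hn0 : n ≠ 0 := by omega
    exact (pow_le_pow_iff_left₀ (by positivity) (by positivity) hn0).1 hv'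
  have h2 : (2:ℝ) ^ M ≤ 2 ^ N := by
    have hMp := two_pow_pos M
    have hNp := two_pow_pos N
    exact (inv_le_inv₀ hNp hMp).1 h1
  exact_mod_cast (pow_le_pow_iff_right₀ (by norm_num : (1:ℝ) < 2)).1 h2

lemma eq_of_same_level_subset {n N : ℕ} {k k' : Fin n → ℕ}
    (h : dCube n N k ⊆ dCube n N k') : k = k' := by
  have hc := h (corner_mem_dCube k)
  rw [mem_dCube] at hc
  funext i
  obtain ⟨h1, h2⟩ := hc i
  have h2p := two_pow_pos N
  have hl : (k' i : ℝ) ≤ k i := by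
    rw [div_le_div_iff_of_pos_right h2p] at h1; exact h1
  have hr : (k i : ℝ) < k' i + 1 := by
    rw [div_lt_div_iff_of_pos_right h2p] at h2; exact h2
  have : k' i ≤ k i := by exact_mod_cast hl
  have : k i < k' i + 1 := by exact_mod_cast hr
  omega

lemma countable_dyadic {n : ℕ} : {R : Set (Fin n → ℝ) | IsDyadicCube n R}.Countable := by
  have hsub : {R : Set (Fin n → ℝ) | IsDyadicCube n R} ⊆
      Set.range (fun q : ℕ × (Fin n → ℕ) => dCube n q.1 q.2) := by
    rintro R ⟨N, k, -, rfl⟩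
    exact ⟨(N, k), rfl⟩
  exact (Set.countable_range _).mono hsub

section Maximal

variable {n : ℕ} (φ : (Fin n → ℝ) → ℝ)

/-- average of `φ` over `R`. -/
def avg (R : Set (Fin n → ℝ)) : ℝ := ((volume R).toReal)⁻¹ * ∫ y in R, φ y

def cubesGT (t : ℝ) : Set (Set (Fin n → ℝ)) := {R | IsDyadicCube n R ∧ t < avg φ R}

def bigU (t : ℝ) : Set (Fin n → ℝ) := ⋃₀ cubesGT φ t

def IsMaxCube (t : ℝ) (R : Set (Fin n → ℝ)) : Prop :=
  R ∈ cubesGT φ t ∧ ∀ R' ∈ cubesGT φ t, R ⊆ R' → R' = R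

lemma cubesGT_countable (t : ℝ) : (cubesGT φ t).Countable :=
  countable_dyadic.mono fun _ hR => hR.1

lemma mem_cubesGT_measurableSet {t : ℝ} {R : Set (Fin n → ℝ)} (hR : R ∈ cubesGT φ t) :
    MeasurableSet R := by
  obtain ⟨⟨N, k, hk, rfl⟩, -⟩ := hR
  exact measurableSet_dCube

lemma bigU_subset_unitCube (t : ℝ) : bigU φ t ⊆ unitCube n := by
  rintro x ⟨R, ⟨⟨N, k, hk, rfl⟩, -⟩, hx⟩
  exact dCube_subset_unitCube hk hx

lemma measurableSet_bigU (t : ℝ) : MeasurableSet (bigU φ t) :=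
  MeasurableSet.sUnion (cubesGT_countable φ t) fun _ hR => mem_cubesGT_measurableSet φ hR

lemma bigU_antitone {t s : ℝ} (h : t ≤ s) : bigU φ s ⊆ bigU φ t := by
  rintro x ⟨R, ⟨hdy, havg⟩, hx⟩
  exact ⟨R, ⟨hdy, lt_of_le_of_lt h havg⟩, hx⟩

lemma exists_maximal (hn : 1 ≤ n) {t : ℝ} {R : Set (Fin n → ℝ)} (hR : R ∈ cubesGT φ t) :
    ∃ R', IsMaxCube φ t R' ∧ R ⊆ R' := by
  classical
  obtain ⟨⟨N, k, hk, rfl⟩, havg⟩ := hR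
  let P : ℕ → Prop := fun M => ∃ k' : Fin n → ℕ, (∀ i, k' i < 2 ^ M) ∧
    dCube n N k ⊆ dCube n M k' ∧ t < avg φ (dCube n M k')
  have hex : ∃ M, P M := ⟨N, k, hk, subset_rfl, havg⟩
  obtain ⟨k₀, hk₀, hsub₀, havg₀⟩ := Nat.find_spec hex
  refine ⟨dCube n (Nat.find hex) k₀, ⟨⟨⟨Nat.find hex, k₀, hk₀, rfl⟩, havg₀⟩, ?_⟩, hsub₀⟩
  rintro R' ⟨⟨M', k', hk', rfl⟩, havg'⟩ hsub
  have hM : M' ≤ Nat.find hex := level_le_of_subset hn hsub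
  rcases eq_or_lt_of_le hM with he | hlt
  · subst he
    exact congrArg (dCube n (Nat.find hex)) (eq_of_same_level_subset hsub).symm
  · exact absurd (⟨k', hk', hsub₀.trans hsub, havg'⟩ : P M') (Nat.find_min hex hlt)

lemma dyadic_nested_or_disjoint {R₁ R₂ : Set (Fin n → ℝ)}
    (h₁ : IsDyadicCube n R₁) (h₂ : IsDyadicCube n R₂) :
    R₁ ⊆ R₂ ∨ R₂ ⊆ R₁ ∨ Disjoint R₁ R₂ := by
  obtain ⟨N₁, k₁, -, rfl⟩ := h₁
  obtain ⟨N₂, k₂, -, rfl⟩ := h₂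
  exact dCube_nested_or_disjoint (n := n) (N := N₂) (M := N₁) (k := k₂) (k' := k₁)

lemma maxCubes_pairwiseDisjoint (t : ℝ) :
    {R | IsMaxCube φ t R}.PairwiseDisjoint id := by
  rintro R₁ h₁ R₂ h₂ hne
  rcases dyadic_nested_or_disjoint h₁.1.1 h₂.1.1 with h | h | h
  · exact absurd (h₁.2 _ h₂.1 h).symm hne
  · exact absurd (h₂.2 _ h₁.1 h) hne
  · exact h

lemma bigU_eq_sUnion_max (hn : 1 ≤ n) (t : ℝ) :
    bigU φ t = ⋃₀ {R | IsMaxCube φ t R} := by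
  apply Set.Subset.antisymm
  · rintro x ⟨R, hR, hx⟩
    obtain ⟨R', hR', hsub⟩ := exists_maximal φ hn hR
    exact ⟨R', hR', hsub hx⟩
  · rintro x ⟨R, hR, hx⟩
    exact ⟨R, hR.1, hx⟩

lemma percube_strict (hφ0 : ∀ x, 0 ≤ φ x) (hφint : IntegrableOn φ (unitCube n))
    {t : ℝ} (ht : 0 < t) {R : Set (Fin n → ℝ)} (hR : R ∈ cubesGT φ t) :
    ENNReal.ofReal t * volume R < ∫⁻ y in R, ENNReal.ofReal (φ y) := by
  obtain ⟨⟨N, k, hk, rfl⟩, havg⟩ := hR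
  show ENNReal.ofReal t * volume (dCube n N k) < ∫⁻ y in dCube n N k, ENNReal.ofReal (φ y)
  set v := (volume (dCube n N k)).toReal with hv
  have hvpos : 0 < v := volume_dCube_toReal_pos k
  have hIR : IntegrableOn φ (dCube n N k) volume :=
    hφint.mono_set (dCube_subset_unitCube hk)
  have hlin : ∫⁻ y in dCube n N k, ENNReal.ofReal (φ y)
      = ENNReal.ofReal (∫ y in dCube n N k, φ y) :=
    (ofReal_integral_eq_lintegral_ofReal hIR (Eventually.of_forall fun x => hφ0 x)).symm
  have h' : t < v⁻¹ * ∫ y in dCube n N k, φ y := havg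
  have hint : t * v < ∫ y in dCube n N k, φ y := by
    rw [inv_mul_eq_div, lt_div_iff₀ hvpos] at h'
    linarith
  have hvol : volume (dCube n N k) = ENNReal.ofReal v :=
    (ENNReal.ofReal_toReal (volume_dCube_ne_top k)).symm
  rw [hlin, hvol, ← ENNReal.ofReal_mul ht.le]
  exact (ENNReal.ofReal_lt_ofReal_iff (by nlinarith)).2 hint

lemma weak_type_strict (hn : 1 ≤ n) (hφ0 : ∀ x, 0 ≤ φ x)
    (hφint : IntegrableOn φ (unitCube n)) {t : ℝ} (ht : 0 < t)
    (hne : (bigU φ t).Nonempty) :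
    ENNReal.ofReal t * volume (bigU φ t) < ∫⁻ y in bigU φ t, ENNReal.ofReal (φ y) := by
  classical
  set Mset := {R | IsMaxCube φ t R} with hMset
  have hMc : Mset.Countable := countable_dyadic.mono fun R hR => hR.1.1
  haveI : Countable Mset := hMc.to_subtype
  have hm : ∀ R : Mset, MeasurableSet (R : Set (Fin n → ℝ)) :=
    fun R => mem_cubesGT_measurableSet φ R.2.1
  have hd : Pairwise (Function.onFun Disjoint fun R : Mset => (R : Set (Fin n → ℝ))) :=
    fun i j hij => maxCubes_pairwiseDisjoint φ t i.2 j.2 (fun e => hij (Subtype.ext e))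
  have hU : bigU φ t = ⋃ R : Mset, (R : Set (Fin n → ℝ)) := by
    rw [bigU_eq_sUnion_max φ hn, Set.sUnion_eq_iUnion]
  have hvol : volume (bigU φ t) = ∑' R : Mset, volume (R : Set (Fin n → ℝ)) := by
    rw [hU]; exact measure_iUnion hd hm
  have hlint : ∫⁻ y in bigU φ t, ENNReal.ofReal (φ y)
      = ∑' R : Mset, ∫⁻ y in (R : Set (Fin n → ℝ)), ENNReal.ofReal (φ y) := by
    rw [hU]; exact lintegral_iUnion hm hd _
  obtain ⟨x, hx⟩ := hne
  rw [bigU_eq_sUnion_max φ hn] at hx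
  obtain ⟨R₀, hR₀, -⟩ := hx
  have hfin : (∑' R : Mset, ENNReal.ofReal t * volume (R : Set (Fin n → ℝ))) ≠ ⊤ := by
    rw [ENNReal.tsum_mul_left, ← hvol]
    have h1 : volume (bigU φ t) ≤ 1 := by
      rw [← volume_unitCube (n := n)]
      exact measure_mono (bigU_subset_unitCube φ t)
    exact ENNReal.mul_ne_top ENNReal.ofReal_ne_top
      (lt_of_le_of_lt h1 (by norm_num)).ne
  calc ENNReal.ofReal t * volume (bigU φ t)
      = ∑' R : Mset, ENNReal.ofReal t * volume (R : Set (Fin n → ℝ)) := by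
        rw [hvol, ENNReal.tsum_mul_left]
    _ < ∑' R : Mset, ∫⁻ y in (R : Set (Fin n → ℝ)), ENNReal.ofReal (φ y) := by
        exact ENNReal.tsum_lt_tsum (i := (⟨R₀, hR₀⟩ : Mset)) hfin
          (fun R => (percube_strict φ hφ0 hφint ht R.2.1).le)
          (percube_strict φ hφ0 hφint ht hR₀.1)
    _ = ∫⁻ y in bigU φ t, ENNReal.ofReal (φ y) := hlint.symm

lemma weak_type (hn : 1 ≤ n) (hφ0 : ∀ x, 0 ≤ φ x)
    (hφint : IntegrableOn φ (unitCube n)) {t : ℝ} (ht : 0 < t) :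
    ENNReal.ofReal t * volume (bigU φ t) ≤ ∫⁻ y in bigU φ t, ENNReal.ofReal (φ y) := by
  rcases Set.eq_empty_or_nonempty (bigU φ t) with h | h
  · simp [h]
  · exact (weak_type_strict φ hn hφ0 hφint ht h).le

lemma lintegral_bigU_le (hφ0 : ∀ x, 0 ≤ φ x) (hφint : IntegrableOn φ (unitCube n))
    (hQf : (∫ x in unitCube n, φ x) = f) (t : ℝ) :
    ∫⁻ y in bigU φ t, ENNReal.ofReal (φ y) ≤ ENNReal.ofReal f := by
  calc ∫⁻ y in bigU φ t, ENNReal.ofReal (φ y)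
      ≤ ∫⁻ y in unitCube n, ENNReal.ofReal (φ y) :=
        lintegral_mono_set (bigU_subset_unitCube φ t)
    _ = ENNReal.ofReal f := by
        rw [← ofReal_integral_eq_lintegral_ofReal hφint
          (Eventually.of_forall fun x => hφ0 x), hQf]

end Maximal

lemma lintegral_rpow_Ioo {a b q : ℝ} (ha : 0 ≤ a) (hab : a ≤ b) (hq : -1 < q) :
    ∫⁻ t in Ioo a b, ENNReal.ofReal (t ^ q) =
      ENNReal.ofReal ((b ^ (q + 1) - a ^ (q + 1)) / (q + 1)) := by
  have hii : IntervalIntegrable (fun t : ℝ => t ^ q) volume a b :=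
    intervalIntegral.intervalIntegrable_rpow' hq
  have hio : IntegrableOn (fun t : ℝ => t ^ q) (Ioo a b) volume := by
    have := (intervalIntegrable_iff_integrableOn_Ioo_of_le hab).1 hii
    exact this
  have hnn : 0 ≤ᵐ[volume.restrict (Ioo a b)] fun t : ℝ => t ^ q := by
    filter_upwards [ae_restrict_mem measurableSet_Ioo] with t ht
    exact Real.rpow_nonneg (le_trans ha ht.1.le) q
  rw [← ofReal_integral_eq_lintegral_ofReal hio hnn]
  congr 1
  rw [← MeasureTheory.integral_Ioc_eq_integral_Ioo,
    ← intervalIntegral.integral_of_le hab, integral_rpow (Or.inl hq)]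

end NoExt

open NoExt ENNReal

set_option maxHeartbeats 1000000 in
/-- Nonexistence of extremal functions for the Bellman function when `f^p < F`. -/
theorem no_extremal_function (n : ℕ) (hn : 1 ≤ n) (p f F z : ℝ) (hp : 1 < p)
    (hf : 0 < f ^ p) (hfF : f ^ p < F)
    (hz : z ∈ Set.Icc 1 (p / (p - 1)))
    (hzeq : -(p - 1) * z ^ p + p * z ^ (p - 1) = f ^ p / F) :
    ¬ ∃ φ : (Fin n → ℝ) → ℝ, (∀ x, 0 ≤ φ x) ∧ Measurable φ ∧
        (∫ x in unitCube n, φ x) = f ∧ (∫ x in unitCube n, φ x ^ p) = F ∧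
        (∫ x in unitCube n, (dyadicMax n φ x) ^ p) = F * z ^ p := by
  rintro ⟨φ, hφ0, hφm, hQf, hQF, hQM⟩
  have hp0 : (0:ℝ) < p := by linarith
  have hp1 : (0:ℝ) < p - 1 := by linarith
  set Q : Set (Fin n → ℝ) := unitCube n with hQdef
  set μ : Measure (Fin n → ℝ) := volume.restrict Q with hμdef
  set u : (Fin n → ℝ) → ℝ := dyadicMax n φ with hudef
  set φ' : (Fin n → ℝ) → ℝ≥0∞ := fun x => ENNReal.ofReal (φ x) with hφ'def
  have hφ'm : Measurable φ' := hφm.ennreal_ofReal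
  -- positivity of the data
  have hf0 : 0 ≤ f := hQf ▸ setIntegral_nonneg measurableSet_unitCube fun x _ => hφ0 x
  have hfne : f ≠ 0 := by
    intro h
    rw [h, Real.zero_rpow hp0.ne'] at hf
    exact lt_irrefl 0 hf
  have hfpos : 0 < f := lt_of_le_of_ne hf0 (Ne.symm hfne)
  have hFpos : 0 < F := lt_trans hf hfF
  have hz1 : 1 ≤ z := hz.1
  have hzpos : (0:ℝ) < z := by linarith
  have hzp1 : (1:ℝ) ≤ z ^ p := by
    calc (1:ℝ) = 1 ^ p := (Real.one_rpow p).symm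
      _ ≤ z ^ p := Real.rpow_le_rpow (by norm_num) hz1 hp0.le
  have hFzp_pos : 0 < F * z ^ p := by nlinarith
  -- integrability from the nonzero integral values
  have hφint : IntegrableOn φ Q := by
    by_contra h
    rw [MeasureTheory.integral_undef h] at hQf
    exact hfne hQf.symm
  have hφpint : IntegrableOn (fun x => φ x ^ p) Q := by
    by_contra h
    rw [MeasureTheory.integral_undef h] at hQF
    exact hFpos.ne' hQF.symm
  have huint : IntegrableOn (fun x => u x ^ p) Q := by
    by_contra h
    rw [MeasureTheory.integral_undef h] at hQM
    exact hFzp_pos.ne' hQM.symm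
  -- nonnegativity and a.e.-measurability of u
  have hu0 : ∀ x, 0 ≤ u x := by
    intro x
    apply Real.sSup_nonneg
    rintro a ⟨R, hR, hxR, rfl⟩
    have hRm : MeasurableSet R := by
      obtain ⟨N, k, -, rfl⟩ := hR; exact NoExt.measurableSet_dCube
    have h1 : 0 ≤ ∫ y in R, φ y := setIntegral_nonneg hRm fun y _ => hφ0 y
    positivity
  have huaem : AEMeasurable u μ := by
    have h1 : AEMeasurable (fun x => u x ^ p) μ := huint.aemeasurable
    have h2 : (fun x => (u x ^ p) ^ p⁻¹) = u := by
      funext x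
      exact Real.rpow_rpow_inv (hu0 x) hp0.ne'
    rw [← h2]
    exact h1.pow aemeasurable_const
  set v : (Fin n → ℝ) → ℝ := huaem.mk u with hvdef
  have hvm : Measurable v := huaem.measurable_mk
  have hvae : u =ᵐ[μ] v := huaem.ae_eq_mk
  have hv0 : ∀ᵐ x ∂μ, 0 ≤ v x := hvae.mono fun x hx => hx ▸ hu0 x
  -- basic lintegral identities
  have hf'Q : ∫⁻ x, φ' x ∂μ = ENNReal.ofReal f := by
    rw [← ofReal_integral_eq_lintegral_ofReal hφint (Eventually.of_forall fun x => hφ0 x), hQf]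
  have hFQ : ∫⁻ x, φ' x ^ p ∂μ = ENNReal.ofReal F := by
    have h1 : ∀ x, φ' x ^ p = ENNReal.ofReal (φ x ^ p) := fun x =>
      ENNReal.ofReal_rpow_of_nonneg (hφ0 x) hp0.le
    simp_rw [h1]
    rw [← ofReal_integral_eq_lintegral_ofReal hφpint
      (Eventually.of_forall fun x => Real.rpow_nonneg (hφ0 x) p), hQF]
  have hA : ∫⁻ x, ENNReal.ofReal (v x ^ p) ∂μ = ENNReal.ofReal (F * z ^ p) := by
    calc ∫⁻ x, ENNReal.ofReal (v x ^ p) ∂μ = ∫⁻ x, ENNReal.ofReal (u x ^ p) ∂μ :=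
          lintegral_congr_ae (hvae.mono fun x hx => by dsimp only; rw [hx])
      _ = ENNReal.ofReal (∫ x in Q, u x ^ p) :=
          (ofReal_integral_eq_lintegral_ofReal huint
            (Eventually.of_forall fun x => Real.rpow_nonneg (hu0 x) p)).symm
      _ = ENNReal.ofReal (F * z ^ p) := by rw [hQM]
  have hA' : ∫⁻ x, ENNReal.ofReal (v x) ^ p ∂μ = ENNReal.ofReal (F * z ^ p) := by
    rw [← hA]
    apply lintegral_congr_ae
    filter_upwards [hv0] with x hx
    exact ENNReal.ofReal_rpow_of_nonneg hx hp0.le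
  -- the collection of averages seen at a point
  set Sx : (Fin n → ℝ) → Set ℝ := fun x => { a : ℝ | ∃ R : Set (Fin n → ℝ),
    IsDyadicCube n R ∧ x ∈ R ∧ a = ((volume R).toReal)⁻¹ * ∫ y in R, φ y } with hSxdef
  have hu_eq : ∀ x, u x = sSup (Sx x) := fun x => rfl
  have hSx_f : ∀ x ∈ Q, f ∈ Sx x := by
    intro x hx
    refine ⟨Q, unitCube_isDyadic, hx, ?_⟩
    rw [← hQf]
    have : volume Q = 1 := volume_unitCube
    rw [this]
    norm_num
    rfl
  have hSx_avg : ∀ x R, IsDyadicCube n R → x ∈ R → NoExt.avg φ R ∈ Sx x :=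
    fun x R hR hxR => ⟨R, hR, hxR, rfl⟩
  have hSx_sub : ∀ x, Sx x ≠ ∅ → x ∈ Q := by
    intro x hx
    rcases Set.nonempty_iff_ne_empty.2 hx with ⟨a, R, hR, hxR, -⟩
    obtain ⟨N, k, hk, rfl⟩ := hR
    exact dCube_subset_unitCube hk hxR
  -- points where the averages are unbounded form a null set
  have hZb : volume {x | ¬ BddAbove (Sx x)} = 0 := by
    set Zb := {x | ¬ BddAbove (Sx x)} with hZbdef
    have hsub : ∀ t : ℝ, 0 < t → Zb ⊆ bigU φ t := by
      intro t ht x hx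
      rw [hZbdef, Set.mem_setOf_eq, not_bddAbove_iff] at hx
      obtain ⟨a, haS, hta⟩ := hx t
      obtain ⟨R, hR, hxR, rfl⟩ := haS
      exact ⟨R, ⟨hR, hta⟩, hxR⟩
    by_contra h0
    have hZQ : Zb ⊆ Q := by
      intro x hx
      apply hSx_sub
      intro he
      rw [hZbdef, Set.mem_setOf_eq, he] at hx
      exact hx bddAbove_empty
    have hfin : volume Zb ≤ 1 := by
      calc volume Zb ≤ volume Q := measure_mono hZQ
        _ = 1 := volume_unitCube
    have hZfin : volume Zb ≠ ⊤ := (lt_of_le_of_lt hfin (by norm_num)).ne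
    set ε := (volume Zb).toReal with hεdef
    have hεpos : 0 < ε := ENNReal.toReal_pos h0 hZfin
    set t := (f + 1) / ε with htdef
    have htpos : 0 < t := by positivity
    have hchain : ENNReal.ofReal t * volume (bigU φ t) ≤ ENNReal.ofReal f :=
      le_trans (weak_type φ hn hφ0 hφint htpos) (lintegral_bigU_le φ hφ0 hφint hQf t)
    have h1 : ENNReal.ofReal t * volume Zb ≤ ENNReal.ofReal f :=
      le_trans (mul_le_mul_right (measure_mono (hsub t htpos)) _) hchain
    have h2 : volume Zb = ENNReal.ofReal ε := (ENNReal.ofReal_toReal hZfin).symm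
    rw [h2, ← ENNReal.ofReal_mul htpos.le] at h1
    have h3 : t * ε = f + 1 := div_mul_cancel₀ _ hεpos.ne'
    rw [h3] at h1
    have h4 := (ENNReal.ofReal_le_ofReal_iff hf0).1 h1
    linarith
  -- the main a.e. description of v
  have hae_main : ∀ᵐ x ∂μ, (∀ t : ℝ, t < v x ↔ x ∈ bigU φ t) ∧ f ≤ v x := by
    have hbad : μ {x | ¬ BddAbove (Sx x)} = 0 :=
      le_antisymm (le_trans (Measure.restrict_le_self _) hZb.le) (zero_le)
    have hbdd_ae : ∀ᵐ x ∂μ, BddAbove (Sx x) := hbad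
    filter_upwards [ae_restrict_mem measurableSet_unitCube, hvae, hbdd_ae]
      with x hxQ hxu hxb
    have hne : (Sx x).Nonempty := ⟨f, hSx_f x hxQ⟩
    constructor
    · intro t
      constructor
      · intro ht
        rw [← hxu, hu_eq] at ht
        obtain ⟨a, haS, hta⟩ := exists_lt_of_lt_csSup hne ht
        obtain ⟨R, hR, hxR, rfl⟩ := haS
        exact ⟨R, ⟨hR, hta⟩, hxR⟩
      · rintro ⟨R, ⟨hR, havg⟩, hxR⟩
        rw [← hxu, hu_eq]
        exact lt_of_lt_of_le havg (le_csSup hxb (hSx_avg x R hR hxR))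
    · rw [← hxu, hu_eq]
      exact le_csSup hxb (hSx_f x hxQ)
  -- transfer to statements about `volume`
  have haeQ : ∀ᵐ x ∂(volume : Measure (Fin n → ℝ)),
      x ∈ Q → ((∀ t : ℝ, t < v x ↔ x ∈ bigU φ t) ∧ f ≤ v x) :=
    (ae_restrict_iff' measurableSet_unitCube).1 hae_main
  have hsetae : ∀ t : ℝ, ({x | t < v x} ∩ Q : Set (Fin n → ℝ)) =ᵐ[volume] bigU φ t := by
    intro t
    rw [eventuallyEq_set]
    filter_upwards [haeQ] with x hx
    constructor
    · rintro ⟨h1, h2⟩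
      exact ((hx h2).1 t).1 h1
    · intro hb
      have hxQ : x ∈ Q := bigU_subset_unitCube φ t hb
      exact ⟨((hx hxQ).1 t).2 hb, hxQ⟩
  have hμU : ∀ t : ℝ, μ {x | t < v x} = volume (bigU φ t) := by
    intro t
    rw [hμdef, Measure.restrict_apply (measurableSet_lt measurable_const hvm)]
    exact measure_congr (hsetae t)
  have hJU : ∀ t : ℝ, ∫⁻ x in {x | t < v x}, φ' x ∂μ = ∫⁻ y in bigU φ t, φ' y := by
    intro t
    rw [hμdef, Measure.restrict_restrict (measurableSet_lt measurable_const hvm),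
      Measure.restrict_congr_set (hsetae t)]
  -- the two λ-integrands
  set g : ℝ → ℝ≥0∞ := fun t => volume (bigU φ t) * ENNReal.ofReal (t ^ (p - 1)) with hgdef
  set h : ℝ → ℝ≥0∞ := fun t =>
    (∫⁻ y in bigU φ t, φ' y) * ENNReal.ofReal (t ^ (p - 2)) with hhdef
  set W₁ : ℝ≥0∞ := ∫⁻ t in Ioi f, g t with hW₁def
  set W₂ : ℝ≥0∞ := ∫⁻ t in Ioi f, h t with hW₂def
  -- layer cake
  have hLC : ENNReal.ofReal (F * z ^ p) =
      ENNReal.ofReal p * ∫⁻ t in Ioi (0:ℝ), g t := by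
    rw [← hA, lintegral_rpow_eq_lintegral_meas_lt_mul μ hv0 hvm.aemeasurable hp0]
    congr 1
    refine lintegral_congr fun t => ?_
    rw [hgdef]
    dsimp only
    rw [← hμU t]
  -- split the λ-integral at f
  have hsplit : ∫⁻ t in Ioi (0:ℝ), g t = (∫⁻ t in Ioc 0 f, g t) + W₁ := by
    rw [hW₁def, ← lintegral_union measurableSet_Ioi (Set.Ioc_disjoint_Ioi le_rfl),
      Set.Ioc_union_Ioi_eq_Ioi hfpos.le]
  -- below level f, bigU has full measure
  have hU1 : ∀ t : ℝ, 0 < t → t < f → volume (bigU φ t) = 1 := by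
    intro t ht htf
    apply le_antisymm
    · calc volume (bigU φ t) ≤ volume Q := measure_mono (bigU_subset_unitCube φ t)
        _ = 1 := volume_unitCube
    · set D := {x | ¬ (x ∈ Q → ((∀ s : ℝ, s < v x ↔ x ∈ bigU φ s) ∧ f ≤ v x))} with hDdef
      have hDnull : volume D = 0 := ae_iff.1 haeQ
      have hQsub : Q ⊆ bigU φ t ∪ D := by
        intro x hxQ
        by_cases hxD : x ∈ D
        · exact Or.inr hxD
        · rw [hDdef, Set.mem_setOf_eq, not_not] at hxD
          obtain ⟨hiff, hfle⟩ := hxD hxQ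
          exact Or.inl ((hiff t).1 (lt_of_lt_of_le htf hfle))
      calc (1:ℝ≥0∞) = volume Q := volume_unitCube.symm
        _ ≤ volume (bigU φ t ∪ D) := measure_mono hQsub
        _ ≤ volume (bigU φ t) + volume D := measure_union_le _ _
        _ = volume (bigU φ t) := by rw [hDnull, add_zero]
  have hI₁ : ∫⁻ t in Ioc 0 f, g t = ENNReal.ofReal (f ^ p / p) := by
    have e1 : ∫⁻ t in Ioc 0 f, g t = ∫⁻ t in Ioo 0 f, g t :=
      (setLIntegral_congr Ioo_ae_eq_Ioc).symm
    rw [e1]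
    have e2 : ∫⁻ t in Ioo 0 f, g t = ∫⁻ t in Ioo 0 f, ENNReal.ofReal (t ^ (p - 1)) := by
      refine setLIntegral_congr_fun measurableSet_Ioo (fun t ht => ?_)
      rw [hgdef]
      dsimp only
      rw [hU1 t ht.1 ht.2, one_mul]
    rw [e2, lintegral_rpow_Ioo le_rfl hfpos.le (by linarith)]
    have hpe : p - 1 + 1 = p := by ring
    rw [hpe, Real.zero_rpow hp0.ne', sub_zero]
  have hA2 : ENNReal.ofReal (F * z ^ p) = ENNReal.ofReal (f ^ p) + ENNReal.ofReal p * W₁ := by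
    rw [hLC, hsplit, mul_add, hI₁, ← ENNReal.ofReal_mul hp0.le]
    congr 2
    field_simp
  -- pointwise comparison of the two integrands
  have hrw : ∀ t : ℝ, 0 < t →
      ENNReal.ofReal (t ^ (p - 1)) = ENNReal.ofReal t * ENNReal.ofReal (t ^ (p - 2)) := by
    intro t ht
    rw [← ENNReal.ofReal_mul ht.le]
    congr 1
    have hcalc : t * t ^ (p - 2) = t ^ (p - 1) :=
      calc t * t ^ (p - 2) = t ^ (1:ℝ) * t ^ (p - 2) := by rw [Real.rpow_one]
        _ = t ^ (1 + (p - 2)) := (Real.rpow_add ht 1 (p - 2)).symm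
        _ = t ^ (p - 1) := by rw [show (1:ℝ) + (p - 2) = p - 1 by ring]
    exact hcalc.symm
  have hgh : ∀ t ∈ Ioi f, g t ≤ h t := by
    intro t ht
    have ht0 : 0 < t := lt_trans hfpos ht
    calc g t = (ENNReal.ofReal t * volume (bigU φ t)) * ENNReal.ofReal (t ^ (p - 2)) := by
          rw [hgdef]; dsimp only; rw [hrw t ht0]; ring
      _ ≤ (∫⁻ y in bigU φ t, φ' y) * ENNReal.ofReal (t ^ (p - 2)) :=
          mul_le_mul_left (weak_type φ hn hφ0 hφint ht0) _
      _ = h t := rfl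
  have hghs : ∀ t ∈ Ioi f, volume (bigU φ t) ≠ 0 → g t < h t := by
    intro t ht hU0
    have ht0 : 0 < t := lt_trans hfpos ht
    have hne : (bigU φ t).Nonempty := nonempty_of_measure_ne_zero hU0
    have hlt : ENNReal.ofReal t * volume (bigU φ t) < ∫⁻ y in bigU φ t, φ' y :=
      weak_type_strict φ hn hφ0 hφint ht0 hne
    calc g t = (ENNReal.ofReal t * volume (bigU φ t)) * ENNReal.ofReal (t ^ (p - 2)) := by
          rw [hgdef]; dsimp only; rw [hrw t ht0]; ring
      _ < (∫⁻ y in bigU φ t, φ' y) * ENNReal.ofReal (t ^ (p - 2)) := by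
          refine ENNReal.mul_lt_mul_left ?_ ENNReal.ofReal_ne_top hlt
          exact (ENNReal.ofReal_pos.2 (Real.rpow_pos_of_pos ht0 _)).ne'
      _ = h t := rfl
  -- Fubini computation of W₂
  set K : ℝ → (Fin n → ℝ) → ℝ≥0∞ := fun t x =>
    Set.indicator {q : ℝ × (Fin n → ℝ) | q.1 < v q.2}
      (fun q => ENNReal.ofReal (φ q.2) * ENNReal.ofReal (q.1 ^ (p - 2))) (t, x) with hKdef
  have hKm : Measurable (Function.uncurry K) := by
    apply Measurable.indicator
    · exact ((hφm.comp measurable_snd).ennreal_ofReal).mul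
        ((measurable_fst.pow measurable_const).ennreal_ofReal)
    · exact measurableSet_lt measurable_fst (hvm.comp measurable_snd)
  have hKint : ∀ t : ℝ, ∫⁻ x, K t x ∂μ = h t := by
    intro t
    have e1 : (fun x => K t x) = Set.indicator {x | t < v x}
        (fun x => φ' x * ENNReal.ofReal (t ^ (p - 2))) := by
      funext x
      by_cases hc : t < v x <;>
        simp [hKdef, Set.indicator_apply, hc, hφ'def]
    rw [e1, lintegral_indicator (measurableSet_lt measurable_const hvm),
      lintegral_mul_const _ hφ'm, hJU t]
  have hW₂swap : W₂ = ∫⁻ x, (∫⁻ t in Ioi f, K t x) ∂μ := by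
    rw [hW₂def, ← lintegral_congr fun t => hKint t]
    exact lintegral_lintegral_swap hKm.aemeasurable
  have hinner : ∀ᵐ x ∂μ, (∫⁻ t in Ioi f, K t x) =
      φ' x * ENNReal.ofReal ((v x ^ (p - 1) - f ^ (p - 1)) / (p - 1)) := by
    filter_upwards [hae_main] with x hx
    obtain ⟨-, hfv⟩ := hx
    have e1 : (fun t => K t x) = Set.indicator {t : ℝ | t < v x}
        (fun t => φ' x * ENNReal.ofReal (t ^ (p - 2))) := by
      funext t
      by_cases hc : t < v x <;>
        simp [hKdef, Set.indicator_apply, hc, hφ'def]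
    have hIio : MeasurableSet {t : ℝ | t < v x} := measurableSet_Iio
    rw [e1, lintegral_indicator hIio, Measure.restrict_restrict hIio]
    have hset : ({t : ℝ | t < v x} : Set ℝ) ∩ Ioi f = Ioo f (v x) := Set.Iio_inter_Ioi
    have hmono : Measurable fun t : ℝ => ENNReal.ofReal (t ^ (p - 2)) :=
      (measurable_id.pow measurable_const).ennreal_ofReal
    rw [hset, lintegral_const_mul _ hmono,
      lintegral_rpow_Ioo hfpos.le hfv (by linarith),
      show p - 2 + 1 = p - 1 by ring]
  have hW₂eval : W₂ = ∫⁻ x, φ' x *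
      ENNReal.ofReal ((v x ^ (p - 1) - f ^ (p - 1)) / (p - 1)) ∂μ :=
    hW₂swap.trans (lintegral_congr_ae hinner)
  -- relate W₂ to B
  set B : ℝ≥0∞ := ∫⁻ x, φ' x * ENNReal.ofReal (v x ^ (p - 1)) ∂μ with hBdef
  set D : ℝ≥0∞ := ∫⁻ x, φ' x * ENNReal.ofReal (v x ^ (p - 1) - f ^ (p - 1)) ∂μ with hDdef
  have hW₂D : W₂ = ENNReal.ofReal ((p - 1)⁻¹) * D := by
    rw [hW₂eval, hDdef, ← lintegral_const_mul' _ _ ENNReal.ofReal_ne_top]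
    refine lintegral_congr fun x => ?_
    rw [div_eq_inv_mul, ENNReal.ofReal_mul (by positivity), mul_left_comm]
  have hDB : D + ENNReal.ofReal (f ^ p) = B := by
    have hc : ∫⁻ x, φ' x * ENNReal.ofReal (f ^ (p - 1)) ∂μ = ENNReal.ofReal (f ^ p) := by
      rw [lintegral_mul_const _ hφ'm, hf'Q, ← ENNReal.ofReal_mul hf0]
      congr 1
      calc f * f ^ (p - 1) = f ^ (1:ℝ) * f ^ (p - 1) := by rw [Real.rpow_one]
        _ = f ^ (1 + (p - 1)) := (Real.rpow_add hfpos 1 (p - 1)).symm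
        _ = f ^ p := by rw [show (1:ℝ) + (p - 1) = p by ring]
    rw [← hc, hDdef, ← lintegral_add_right _ (hφ'm.mul_const (ENNReal.ofReal (f ^ (p - 1)))), hBdef]
    refine lintegral_congr_ae ?_
    filter_upwards [hae_main, hv0] with x hx hx0
    obtain ⟨-, hfv⟩ := hx
    have h1 : f ^ (p - 1) ≤ v x ^ (p - 1) := Real.rpow_le_rpow hfpos.le hfv hp1.le
    rw [← mul_add, ← ENNReal.ofReal_add (by linarith) (by positivity), sub_add_cancel]
  -- Hölder's inequality
  set q : ℝ := p / (p - 1) with hqdef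
  have hq0 : 0 < q := by rw [hqdef]; positivity
  have hconj : p.HolderConjugate q := (Real.holderConjugate_iff_eq_conjExponent hp).2 hqdef
  have hg₂m : AEMeasurable (fun x => ENNReal.ofReal (v x ^ (p - 1))) μ :=
    ((hvm.pow measurable_const).ennreal_ofReal).aemeasurable
  have hg₂q : ∫⁻ x, (ENNReal.ofReal (v x ^ (p - 1))) ^ q ∂μ
      = ENNReal.ofReal (F * z ^ p) := by
    rw [← hA']
    refine lintegral_congr_ae ?_
    filter_upwards [hv0] with x hx
    rw [ENNReal.ofReal_rpow_of_nonneg (Real.rpow_nonneg hx _) hq0.le,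
      ← Real.rpow_mul hx, show (p - 1) * q = p by rw [hqdef]; field_simp,
      ENNReal.ofReal_rpow_of_nonneg hx hp0.le]
  have hBle : B ≤ ENNReal.ofReal F ^ (1/p) * ENNReal.ofReal (F * z ^ p) ^ (1/q) := by
    have hHold := ENNReal.lintegral_mul_le_Lp_mul_Lq μ hconj hφ'm.aemeasurable hg₂m
    rw [hFQ, hg₂q] at hHold
    exact hHold
  -- finiteness
  have hW₁fin : W₁ ≠ ⊤ := by
    intro htop
    have : ENNReal.ofReal (F * z ^ p) = ⊤ := by
      rw [hA2, htop, ENNReal.mul_top (ENNReal.ofReal_pos.2 hp0).ne']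
      simp
    exact ENNReal.ofReal_ne_top this
  have hRfin : ENNReal.ofReal F ^ (1/p) * ENNReal.ofReal (F * z ^ p) ^ (1/q) ≠ ⊤ :=
    ENNReal.mul_ne_top (ENNReal.rpow_ne_top_of_nonneg (by positivity) ENNReal.ofReal_ne_top)
      (ENNReal.rpow_ne_top_of_nonneg (by positivity) ENNReal.ofReal_ne_top)
  have hBfin : B ≠ ⊤ := (lt_of_le_of_lt hBle (lt_top_iff_ne_top.2 hRfin)).ne
  have hDfin : D ≠ ⊤ := by
    intro htop
    apply hBfin
    rw [← hDB, htop]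
    simp
  have hW₂fin : W₂ ≠ ⊤ := by
    rw [hW₂D]
    exact ENNReal.mul_ne_top ENNReal.ofReal_ne_top hDfin
  -- pass to real numbers
  set w₁ : ℝ := W₁.toReal with hw₁def
  set w₂ : ℝ := W₂.toReal with hw₂def
  set b : ℝ := B.toReal with hbdef
  set d : ℝ := D.toReal with hddef
  have e1 : F * z ^ p = f ^ p + p * w₁ := by
    have h1 := congrArg ENNReal.toReal hA2
    rwa [ENNReal.toReal_ofReal (by positivity), ENNReal.toReal_add ENNReal.ofReal_ne_top
      (ENNReal.mul_ne_top ENNReal.ofReal_ne_top hW₁fin), ENNReal.toReal_mul,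
      ENNReal.toReal_ofReal (by positivity), ENNReal.toReal_ofReal hp0.le] at h1
  have e2 : w₂ = (p - 1)⁻¹ * d := by
    have h1 := congrArg ENNReal.toReal hW₂D
    rwa [ENNReal.toReal_mul, ENNReal.toReal_ofReal (by positivity)] at h1
  have e3 : d + f ^ p = b := by
    have h1 := congrArg ENNReal.toReal hDB
    rwa [ENNReal.toReal_add hDfin ENNReal.ofReal_ne_top,
      ENNReal.toReal_ofReal (by positivity)] at h1
  have e4 : b ≤ F ^ (1/p) * (F * z ^ p) ^ (1/q) := by
    have h1 := ENNReal.toReal_mono hRfin hBle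
    rwa [ENNReal.toReal_mul, ← ENNReal.toReal_rpow, ← ENNReal.toReal_rpow,
      ENNReal.toReal_ofReal hFpos.le, ENNReal.toReal_ofReal hFzp_pos.le] at h1
  have e5 : F ^ ((1:ℝ)/p) * (F * z ^ p) ^ ((1:ℝ)/q) = F * z ^ (p - 1) := by
    have h1 : (F * z ^ p) ^ ((1:ℝ)/q) = F ^ ((1:ℝ)/q) * z ^ (p - 1) := by
      rw [Real.mul_rpow hFpos.le (by positivity), ← Real.rpow_mul hzpos.le,
        show p * (1/q) = p - 1 by rw [hqdef]; field_simp]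
    rw [h1, ← mul_assoc, ← Real.rpow_add hFpos,
      show (1:ℝ)/p + 1/q = 1 by rw [hqdef]; field_simp; ring, Real.rpow_one]
  have hfpF : (-(p - 1) * z ^ p + p * z ^ (p - 1)) * F = f ^ p := by
    rw [eq_div_iff hFpos.ne'] at hzeq
    exact hzeq
  have hw1 : w₁ = (F * z ^ p - f ^ p) / p := by
    rw [eq_div_iff hp0.ne']
    linarith
  have hble : b ≤ F * z ^ (p - 1) := e4.trans (le_of_eq e5)
  have w2lew1 : w₂ ≤ w₁ := by
    have hd : d = b - f ^ p := by linarith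
    calc w₂ = (p - 1)⁻¹ * (b - f ^ p) := by rw [e2, hd]
      _ ≤ (p - 1)⁻¹ * (F * z ^ (p - 1) - f ^ p) := by
          apply mul_le_mul_of_nonneg_left (by linarith) (by positivity)
      _ = w₁ := by
          rw [hw1, inv_mul_eq_div, div_eq_div_iff hp1.ne' hp0.ne']
          linear_combination hfpF

  have W₁leW₂ : W₁ ≤ W₂ := by
    rw [hW₁def, hW₂def]
    refine lintegral_mono_ae ?_
    filter_upwards [ae_restrict_mem measurableSet_Ioi] with t ht
    exact hgh t ht
  have hW₁W₂ : W₁ = W₂ :=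
    le_antisymm W₁leW₂ ((ENNReal.toReal_le_toReal hW₂fin hW₁fin).1 w2lew1)
  -- measurability of g and h
  have hgant : Antitone fun t => volume (bigU φ t) :=
    fun s t hst => measure_mono (bigU_antitone φ hst)
  have hhant : Antitone fun t => ∫⁻ y in bigU φ t, φ' y :=
    fun s t hst => lintegral_mono_set (bigU_antitone φ hst)
  have hgm : Measurable g :=
    hgant.measurable.mul ((measurable_id.pow measurable_const).ennreal_ofReal)
  have hhm : Measurable h :=
    hhant.measurable.mul ((measurable_id.pow measurable_const).ennreal_ofReal)
  -- from equality of the integrals, a.e. equality of the integrands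
  have hzero : ∫⁻ t in Ioi f, (h t - g t) = 0 := by
    rw [lintegral_sub hgm]
    · rw [← hW₂def, ← hW₁def, hW₁W₂, tsub_self]
    · rw [← hW₁def]; exact hW₁fin
    · filter_upwards [ae_restrict_mem measurableSet_Ioi] with t ht
      exact hgh t ht
  have haeeq : ∀ᵐ t ∂(volume.restrict (Ioi f)), h t - g t = 0 :=
    (lintegral_eq_zero_iff' ((hhm.sub hgm).aemeasurable)).1 hzero
  have haeeq2 : ∀ᵐ t ∂(volume.restrict (Ioi f)), g t = h t := by
    filter_upwards [haeeq, ae_restrict_mem measurableSet_Ioi] with t h0 ht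
    exact le_antisymm (hgh t ht) (tsub_eq_zero_iff_le.1 h0)
  -- strictness on a set of positive measure: contradiction
  obtain ⟨t₀, ht₀f, ht₀⟩ : ∃ t₀, f < t₀ ∧ volume (bigU φ t₀) ≠ 0 := by
    by_contra hcon
    push_neg at hcon
    have hW₁0 : W₁ = 0 := by
      rw [hW₁def]
      have hg0 : ∀ t ∈ Ioi f, g t = 0 := by
        intro t ht
        rw [hgdef]
        dsimp only
        rw [hcon t ht, zero_mul]
      calc ∫⁻ t in Ioi f, g t = ∫⁻ t in Ioi f, 0 :=
            setLIntegral_congr_fun measurableSet_Ioi hg0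
        _ = 0 := lintegral_zero
    have hw10 : w₁ = 0 := by rw [hw₁def, hW₁0, ENNReal.toReal_zero]
    rw [hw10] at e1
    nlinarith
  have hstrict : ∀ t ∈ Ioc f t₀, g t < h t := by
    intro t ht
    have h1 : volume (bigU φ t₀) ≤ volume (bigU φ t) := measure_mono (bigU_antitone φ ht.2)
    exact hghs t ht.1 fun h0 => ht₀ (le_antisymm (h0 ▸ h1) (zero_le))
  have hnull : (volume.restrict (Ioi f)) {t | ¬ g t = h t} = 0 := ae_iff.1 haeeq2
  have hsub2 : Ioc f t₀ ⊆ {t | ¬ g t = h t} := fun t ht => (hstrict t ht).ne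
  have hIoc0 : (volume.restrict (Ioi f)) (Ioc f t₀) = 0 :=
    le_antisymm (le_trans (measure_mono hsub2) hnull.le) (zero_le)
  rw [Measure.restrict_apply measurableSet_Ioc,
    Set.inter_eq_self_of_subset_left Set.Ioc_subset_Ioi_self, Real.volume_Ioc] at hIoc0
  have hfinal := ENNReal.ofReal_eq_zero.1 hIoc0
  linarith
end
end
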